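/- Let G be a compact Lie group with Lie algebra 𝔤 and G_X the adjoint stabilizer of X. Suppose (V₁, V₂, a, b, X) satisfies: all entries of V₁, V₂ lie in G_X, a, b ∈ G_X, and 𝔪(V₁)·𝔪(V₂)·[a,b] = exp(X). Set d = a^{-1}, d̄ = a·exp(-X/2)·𝔪(V₁), c = a^{-1}, c̄ = a·b. Then 𝔪(V₁) = exp(X/2)·c·d̄·c^{-1}·d and 𝔪(𝔯(V₂)) = c̄·d·exp(-X/2)·c̄^{-1}·d̄. -/

import Mathlib

/-- Abstraction of a Lie group `G` with Lie algebra `𝔤`, exponential map `exp`,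
and adjoint representation `Ad`, satisfying the standard identities
`exp (Ad g X) = g * exp X * g⁻¹` and one-parameter subgroup additivity. -/
structure LieExpAd (G 𝔤 : Type*) [Group G] [TopologicalSpace G]
    [AddCommGroup 𝔤] [Module ℝ 𝔤] where
  exp : 𝔤 → G
  Ad : G →* (𝔤 ≃ₗ[ℝ] 𝔤)
  exp_Ad : ∀ (g : G) (X : 𝔤), exp (Ad g X) = g * exp X * g⁻¹
  exp_add_smul : ∀ (r s : ℝ) (X : 𝔤), exp ((r + s) • X) = exp (r • X) * exp (s • X)

open scoped commutatorElement

variable {G 𝔤 : Type*} [Group G] [TopologicalSpace G] [IsTopologicalGroup G]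
  [AddCommGroup 𝔤] [Module ℝ 𝔤]

/-- `𝔪(a₁,b₁,…,a_ℓ,b_ℓ) = ∏ᵢ [aᵢ,bᵢ]` (ordered product of commutators). -/
def mm {ℓ : ℕ} (V : Fin ℓ → G × G) : G :=
  (List.ofFn fun i => ⁅(V i).1, (V i).2⁆).prod

/-- `𝔯(a₁,b₁,…,a_ℓ,b_ℓ) = (b_ℓ,a_ℓ,…,b₁,a₁)`. -/
def rr {ℓ : ℕ} (V : Fin ℓ → G × G) : Fin ℓ → G × G :=
  fun i => ((V i.rev).2, (V i.rev).1)

/-- Entrywise conjugation `g V g⁻¹` of a tuple. -/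
def conjT {ℓ : ℕ} (g : G) (V : Fin ℓ → G × G) : Fin ℓ → G × G :=
  fun i => (g * (V i).1 * g⁻¹, g * (V i).2 * g⁻¹)

/-- The adjoint stabilizer `G_X = {g | Ad(g)X = X}`. -/
def stab (L : LieExpAd G 𝔤) (X : 𝔤) : Set G := {g | L.Ad g X = X}

/-- All entries of the tuple `V` lie in `G_X`. -/
def tupleStab (L : LieExpAd G 𝔤) (X : 𝔤) {ℓ : ℕ} (V : Fin ℓ → G × G) : Prop :=
  ∀ i, (V i).1 ∈ stab L X ∧ (V i).2 ∈ stab L X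

/-- Membership in the symmetric representation variety `Z^{ℓ,1}_{YM}(G)`. -/
def memZ1 (L : LieExpAd G 𝔤) {ℓ : ℕ} (V : Fin ℓ → G × G) (c : G)
    (Vb : Fin ℓ → G × G) (cb : G) (X : 𝔤) : Prop :=
  tupleStab L X V ∧ tupleStab L X (conjT c Vb) ∧
  mm V = L.exp ((1/2 : ℝ) • X) * (c * cb) ∧
  mm Vb = cb * L.exp (-((1/2 : ℝ) • X)) * c

/-- Membership in the symmetric representation variety `Z^{ℓ,2}_{YM}(G)`. -/
def memZ2 (L : LieExpAd G 𝔤) {ℓ : ℕ} (V : Fin ℓ → G × G) (d c : G)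
    (Vb : Fin ℓ → G × G) (db cb : G) (X : 𝔤) : Prop :=
  tupleStab L X V ∧ tupleStab L X (conjT (d⁻¹ * c) Vb) ∧
  d⁻¹ ∈ stab L X ∧ c * cb ∈ stab L X ∧
  mm V = L.exp ((1/2 : ℝ) • X) * (c * db * c⁻¹ * d) ∧
  mm Vb = cb * d * L.exp (-((1/2 : ℝ) • X)) * cb⁻¹ * db

lemma ofFn_rev' {G : Type*} {n : ℕ} (f : Fin n → G) :
    (List.ofFn fun i => f i.rev) = (List.ofFn f).reverse := by
  apply List.ext_getElem
  · simp
  intro i h1 h2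
  simp only [List.getElem_ofFn, List.getElem_reverse]
  congr 1
  ext
  simp [Fin.rev]
  omega

lemma mm_rr {ℓ : ℕ} (V : Fin ℓ → G × G) : mm (rr V) = (mm V)⁻¹ := by
  unfold mm rr
  rw [List.prod_inv_reverse, List.map_ofFn, ← ofFn_rev']
  refine congrArg (fun l => List.prod l) (congrArg List.ofFn (funext fun i => ?_))
  show ⁅(V i.rev).2, (V i.rev).1⁆ = (⁅(V i.rev).1, (V i.rev).2⁆)⁻¹
  exact (commutatorElement_inv _ _).symm

lemma exp_zero (L : LieExpAd G 𝔤) (X : 𝔤) : L.exp ((0:ℝ) • X) = 1 := by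
  have h := L.exp_add_smul 0 0 X
  simp only [add_zero] at h
  exact mul_left_cancel (a := L.exp ((0:ℝ) • X)) (by rw [mul_one]; exact h.symm)

lemma exp_half_inv (L : LieExpAd G 𝔤) (X : 𝔤) :
    L.exp (-((1/2 : ℝ) • X)) = (L.exp ((1/2 : ℝ) • X))⁻¹ := by
  have h := L.exp_add_smul (1/2) (-(1/2)) X
  have h0 : ((1/2 : ℝ) + -(1/2)) = 0 := by norm_num
  rw [h0, exp_zero, neg_smul] at h
  exact (inv_eq_of_mul_eq_one_right h.symm).symm

lemma exp_stab_comm (L : LieExpAd G 𝔤) (X : 𝔤) (g : G) (hg : g ∈ stab L X)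
    (r : ℝ) : g * L.exp (r • X) = L.exp (r • X) * g := by
  have h := L.exp_Ad g (r • X)
  rw [map_smul, hg] at h
  conv_rhs => rw [h]
  group

/-- given `(V₁,V₂,a,b,X) ∈ X^{2ℓ+1,0}_{YM}(G)`-type data, with
`d = a⁻¹`, `d̄ = a·exp(-X/2)·𝔪(V₁)`, `c = a⁻¹`, `c̄ = a·b`, one has
`𝔪(V₁) = exp(X/2)·c·d̄·c⁻¹·d` and `𝔪(𝔯(V₂)) = c̄·d·exp(-X/2)·c̄⁻¹·d̄`. -/
theorem ym_into_phi2_image [CompactSpace G] (L : LieExpAd G 𝔤) {ℓ : ℕ}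
    (V₁ V₂ : Fin ℓ → G × G) (a b : G) (X : 𝔤)
    (h1 : tupleStab L X V₁) (h2 : tupleStab L X V₂)
    (ha : a ∈ stab L X) (hb : b ∈ stab L X)
    (hm : mm V₁ * mm V₂ * ⁅a, b⁆ = L.exp X) :
    mm V₁ = L.exp ((1/2 : ℝ) • X) *
        (a⁻¹ * (a * L.exp (-((1/2 : ℝ) • X)) * mm V₁) * (a⁻¹)⁻¹ * a⁻¹) ∧
    mm (rr V₂) = (a * b) * a⁻¹ * L.exp (-((1/2 : ℝ) • X)) * (a * b)⁻¹ *
        (a * L.exp (-((1/2 : ℝ) • X)) * mm V₁) := by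
  set E := L.exp ((1/2 : ℝ) • X) with hE
  have hinv : L.exp (-((1/2 : ℝ) • X)) = E⁻¹ := exp_half_inv L X
  have hexpX : L.exp X = E * E := by
    have h := L.exp_add_smul (1/2) (1/2) X
    norm_num at h
    rw [hE]
    exact h
  constructor
  · rw [hinv]; group
  · rw [mm_rr, hinv]
    have hmm : (mm V₂)⁻¹ = ⁅a, b⁆ * (E * E)⁻¹ * mm V₁ := by
      rw [← hexpX, ← hm]; group
    rw [hmm]
    have hbE : b * E⁻¹ = E⁻¹ * b := by
      have := exp_stab_comm L X b hb (-(1/2))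
      rw [neg_smul, hinv] at this; exact this
    have hbE' : b⁻¹ * E⁻¹ = E⁻¹ * b⁻¹ := by
      calc b⁻¹ * E⁻¹ = b⁻¹ * (E⁻¹ * b) * b⁻¹ := by group
        _ = b⁻¹ * (b * E⁻¹) * b⁻¹ := by rw [← hbE]
        _ = E⁻¹ * b⁻¹ := by group
    rw [commutatorElement_def]
    calc a * b * a⁻¹ * b⁻¹ * (E * E)⁻¹ * mm V₁
        = a * b * a⁻¹ * (b⁻¹ * E⁻¹) * E⁻¹ * mm V₁ := by group
      _ = a * b * a⁻¹ * (E⁻¹ * b⁻¹) * E⁻¹ * mm V₁ := by rw [hbE']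
      _ = a * b * a⁻¹ * E⁻¹ * (a * b)⁻¹ * (a * E⁻¹ * mm V₁) := by group
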